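/- Let R > 1 and let f(z) = Σ_{k∈ℤ} a_k z^{k-1} be analytic on the annulus A = {1/R < |z| < R} with |a₀| + Σ_{k=1}^∞ (|a_k| + |a_{-k}|) R^k < ∞. Then the iterated direct images under F(z) = z², namely g_n(z) = Σ_{k∈ℤ} a_{2ⁿk} z^{k-1}, converge uniformly on compact subsets of A to a₀/z, where a₀ = (1/(2πi)) ∮_{|z|=1} f(z) dz. -/

import Mathlib

open Filter

/-- The iterated direct images `gₙ(z) = Σ_k a_{2ⁿk} z^{k-1}` under `F(z) = z²` of an
analytic 1-form `f(z)dz = (Σ_k a_k z^{k-1}) z dz/z` on the annulus `1/R < |z| < R`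
(with summable weighted coefficients) converge uniformly on compact subsets of the
annulus to `a₀/z`, where `a₀ = (1/(2πi)) ∮_{|z|=1} f(z) dz`. -/
theorem iterated_direct_images_converge (R : ℝ) (hR : 1 < R)
    (a : ℤ → ℂ) (f : ℂ → ℂ) (g : ℕ → ℂ → ℂ)
    (hnorm : Summable (fun k : ℕ =>
      (‖a (k + 1 : ℕ)‖ + ‖a (-(k + 1 : ℕ) : ℤ)‖) * R ^ (k + 1)))
    (hf : ∀ z : ℂ, 1 / R < ‖z‖ → ‖z‖ < R →
      HasSum (fun k : ℤ => a k * z ^ (k - 1)) (f z))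
    (hg : ∀ n : ℕ, ∀ z : ℂ, 1 / R < ‖z‖ → ‖z‖ < R →
      HasSum (fun k : ℤ => a ((2 ^ n : ℤ) * k) * z ^ (k - 1)) (g n z)) :
    a 0 = (1 / (2 * (Real.pi : ℂ) * Complex.I)) * (∮ z in C(0, 1), f z) ∧
    ∀ K : Set ℂ, K ⊆ {z : ℂ | 1 / R < ‖z‖ ∧ ‖z‖ < R} →
      IsCompact K →
      TendstoUniformlyOn (fun n z => g n z) (fun z => a 0 / z) atTop K := by
  have hR0 : (0:ℝ) < R := lt_trans one_pos hR
  have hR1 : 1 / R < 1 := by rw [div_lt_one hR0]; exact hR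
  -- basic summability facts
  have hA : Summable (fun k : ℕ => ‖a (k + 1 : ℕ)‖ + ‖a (-(k + 1 : ℕ) : ℤ)‖) := by
    refine hnorm.of_nonneg_of_le (fun k => by positivity) (fun k => ?_)
    exact le_mul_of_one_le_right (by positivity) (one_le_pow₀ hR.le)
  have hpos : Summable (fun k : ℕ => ‖a (k + 1 : ℕ)‖) :=
    hA.of_nonneg_of_le (fun k => norm_nonneg _) (fun k => le_add_of_nonneg_right (norm_nonneg _))
  have hneg : Summable (fun k : ℕ => ‖a (-(k + 1 : ℕ) : ℤ)‖) :=
    hA.of_nonneg_of_le (fun k => norm_nonneg _) (fun k => le_add_of_nonneg_left (norm_nonneg _))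
  have hZ : Summable (fun k : ℤ => ‖a k‖) := by
    refine Summable.of_nat_of_neg_add_one ?_ ?_
    · rw [← summable_nat_add_iff 1]
      convert hpos using 2 with k
    · convert hneg using 2 with k
      simp
  constructor
  · -- Part 1: a 0 = (1/(2πi)) ∮ f
    have h2pi : (0:ℝ) < 2 * Real.pi := Real.two_pi_pos
    set μ := MeasureTheory.volume.restrict (Set.Ioc (0:ℝ) (2*Real.pi)) with hμ
    set F : ℤ → ℝ → ℂ :=
      fun k θ => deriv (circleMap 0 1) θ * (a k * (circleMap 0 1 θ) ^ (k - 1)) with hF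
    have habs : ∀ θ : ℝ, ‖circleMap 0 1 θ‖ = 1 := fun θ => by
      simp [norm_circleMap_zero]
    have hne : ∀ θ : ℝ, circleMap 0 1 θ ≠ 0 := fun θ => by
      intro h
      have := habs θ
      rw [h] at this
      simp at this
    have hker : ∀ k θ, ‖F k θ‖ = ‖a k‖ := by
      intro k θ
      simp [hF, deriv_circleMap, norm_zpow, habs]
    have hFcont : ∀ k, Continuous (F k) := by
      intro k
      have hd : deriv (circleMap 0 1) = fun θ => circleMap 0 1 θ * Complex.I :=
        funext (deriv_circleMap 0 1)
      rw [hF, hd]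
      exact ((continuous_circleMap 0 1).mul continuous_const).mul
        (continuous_const.mul ((continuous_circleMap 0 1).zpow₀ _ (fun θ => Or.inl (hne θ))))
    have hint : ∀ k, MeasureTheory.Integrable (F k) μ := fun k =>
      ((hFcont k).integrableOn_Ioc)
    have hsumint : Summable fun k : ℤ => ∫ θ, ‖F k θ‖ ∂μ := by
      have : (fun k : ℤ => ∫ θ, ‖F k θ‖ ∂μ) = fun k : ℤ => (2 * Real.pi) * ‖a k‖ := by
        funext k
        simp only [hker]
        rw [MeasureTheory.integral_const, hμ, MeasureTheory.measureReal_restrict_apply_univ,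
          Real.volume_real_Ioc_of_le h2pi.le, sub_zero, smul_eq_mul]
      rw [this]
      exact hZ.mul_left _
    have key := MeasureTheory.hasSum_integral_of_summable_integral_norm hint hsumint
    have htsum : ∀ θ : ℝ, ∑' k : ℤ, F k θ = deriv (circleMap 0 1) θ * f (circleMap 0 1 θ) := by
      intro θ
      have h := hf (circleMap 0 1 θ) (by rw [habs]; exact hR1) (by rw [habs]; exact hR)
      exact (h.mul_left _).tsum_eq
    have hcirc : (∮ z in C(0, 1), f z) = ∫ θ, (∑' k : ℤ, F k θ) ∂μ := by
      rw [circleIntegral, intervalIntegral.integral_of_le h2pi.le]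
      exact MeasureTheory.integral_congr_ae (by
        filter_upwards with θ
        rw [htsum θ, smul_eq_mul])
    have hterm : ∀ k : ℤ, (∫ θ, F k θ ∂μ) = ∮ z in C(0, 1), a k * z ^ (k - 1) := by
      intro k
      rw [circleIntegral, intervalIntegral.integral_of_le h2pi.le]
      exact MeasureTheory.integral_congr_ae (by filter_upwards with θ; rw [smul_eq_mul])
    have hval : (fun k : ℤ => ∮ z in C(0, 1), a k * z ^ (k - 1)) =
        fun k : ℤ => if k = 0 then a 0 * (2 * Real.pi * Complex.I) else 0 := by
      funext k
      rw [circleIntegral.integral_const_mul]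
      by_cases hk : k = 0
      · subst hk
        rw [if_pos rfl]
        congr 1
        have hmem : (0:ℂ) ∈ Metric.ball (0:ℂ) 1 := by simp
        calc (∮ z in C(0, 1), z ^ ((0:ℤ) - 1))
            = ∮ z in C(0, 1), (z - 0)⁻¹ := by
              apply circleIntegral.integral_congr zero_le_one
              intro z hz
              simp
          _ = 2 * Real.pi * Complex.I := circleIntegral.integral_sub_inv_of_mem_ball hmem
      · rw [if_neg hk]
        have h := circleIntegral.integral_sub_zpow_of_ne
          (show k - 1 ≠ -1 by omega) 0 0 1
        have h2 : (∮ z in C(0, 1), z ^ (k - 1)) = 0 := by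
          refine Eq.trans ?_ h
          apply circleIntegral.integral_congr zero_le_one
          intro z hz
          simp
        rw [h2, mul_zero]
    have key2 : HasSum (fun k : ℤ => if k = 0 then a 0 * (2 * Real.pi * Complex.I) else 0)
        (∮ z in C(0, 1), f z) := by
      rw [← hval]
      simp only [← hterm, hcirc]
      exact key
    have hval2 : (∮ z in C(0, 1), f z) = a 0 * (2 * Real.pi * Complex.I) :=
      key2.unique (hasSum_ite_eq (0:ℤ) _)
    rw [hval2]
    have hne2 : (2 * (Real.pi : ℂ) * Complex.I) ≠ 0 := by
      simp [Real.pi_ne_zero, Complex.I_ne_zero, Complex.ofReal_ne_zero]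
    field_simp
  · -- Part 2: uniform convergence on compacts
    intro K hK hKc
    rcases K.eq_empty_or_nonempty with rfl | hKne
    · exact tendstoUniformlyOn_empty
    -- coefficient bound
    set C : ℝ := ∑' k : ℕ, (‖a (k + 1 : ℕ)‖ + ‖a (-(k + 1 : ℕ) : ℤ)‖) * R ^ (k + 1) with hC
    have hC0 : 0 ≤ C := tsum_nonneg (fun k => by positivity)
    have hCb : ∀ m : ℤ, m ≠ 0 → ‖a m‖ * R ^ m.natAbs ≤ C := by
      intro m hm
      have hle : ∀ j : ℕ, (‖a (j + 1 : ℕ)‖ + ‖a (-(j + 1 : ℕ) : ℤ)‖) * R ^ (j + 1) ≤ C :=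
        fun j => Summable.le_tsum hnorm j (fun i _ => by positivity)
      match m, hm with
      | Int.ofNat (j+1), _ =>
        refine le_trans ?_ (hle j)
        have h2 : ((Int.ofNat (j+1)).natAbs = j + 1) := rfl
        have h1 : (Int.ofNat (j+1) : ℤ) = ((j + 1 : ℕ) : ℤ) := rfl
        rw [h2, h1]
        have hRp : (0:ℝ) ≤ R ^ (j+1) := by positivity
        exact mul_le_mul_of_nonneg_right (le_add_of_nonneg_right (norm_nonneg _)) hRp
      | Int.negSucc j, _ =>
        refine le_trans ?_ (hle j)
        have h2 : ((Int.negSucc j).natAbs = j + 1) := rfl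
        have h1 : Int.negSucc j = (-(j + 1 : ℕ) : ℤ) := rfl
        rw [h2, h1]
        have hRp : (0:ℝ) ≤ R ^ (j+1) := by positivity
        exact mul_le_mul_of_nonneg_right (le_add_of_nonneg_left (norm_nonneg _)) hRp
    -- compactness: extreme values
    obtain ⟨zM, hzM, hM⟩ := hKc.exists_isMaxOn hKne continuous_norm.continuousOn
    obtain ⟨zm, hzm, hm⟩ := hKc.exists_isMinOn hKne continuous_norm.continuousOn
    have hzm0 : 0 < ‖zm‖ := lt_trans (by positivity) (hK hzm).1
    set ρ : ℝ := max (‖zM‖) ‖zm‖⁻¹ with hρ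
    have hρ1 : 1 ≤ ρ := by
      rcases le_or_gt 1 (‖zM‖) with h | h
      · exact le_max_of_le_left h
      · refine le_max_of_le_right ?_
        rw [one_le_inv_iff₀]
        exact ⟨hzm0, le_of_lt (lt_of_le_of_lt (hm hzM) h)⟩
    have hρ0 : 0 < ρ := lt_of_lt_of_le one_pos hρ1
    have hρR : ρ < R := by
      refine max_lt (hK hzM).2 ?_
      rw [inv_lt_comm₀ hzm0 hR0, ← one_div]
      exact (hK hzm).1
    have hzub : ∀ z ∈ K, ‖z‖ ≤ ρ := fun z hz => le_max_of_le_left (hM hz)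
    have hzlb : ∀ z ∈ K, ‖z‖⁻¹ ≤ ρ := fun z hz =>
      le_max_of_le_right (inv_anti₀ hzm0 (hm hz))
    have hz0 : ∀ z ∈ K, 0 < ‖z‖ := fun z hz => lt_trans (by positivity) (hK hz).1
    -- zpow bound
    have hzpow : ∀ z ∈ K, ∀ m : ℤ, ‖z‖ ^ m ≤ ρ ^ m.natAbs := by
      intro z hz m
      rcases Int.natAbs_eq m with h | h
      · rw [h, zpow_natCast]
        exact pow_le_pow_left₀ (norm_nonneg z) (hzub z hz) _
      · rw [h, zpow_neg, zpow_natCast, ← inv_pow]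
        simp only [Int.natAbs_neg, Int.natAbs_natCast]
        exact pow_le_pow_left₀ (by positivity) (hzlb z hz) _
    have hzpow' : ∀ z ∈ K, ∀ k : ℤ, ‖z‖ ^ (k - 1) ≤ ρ ^ (k.natAbs + 1) := by
      intro z hz k
      refine le_trans (hzpow z hz (k - 1)) (pow_le_pow_right₀ hρ1 ?_)
      calc (k - 1).natAbs ≤ k.natAbs + (1:ℤ).natAbs := Int.natAbs_sub_le k 1
        _ = k.natAbs + 1 := rfl
    -- the geometric ratio
    set q : ℕ → ℝ := fun n => ρ / R ^ (2 ^ n) with hq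
    have hq0 : ∀ n, 0 < q n := fun n => div_pos hρ0 (by positivity)
    have hqt : Tendsto q atTop (nhds 0) := by
      apply Filter.Tendsto.div_atTop tendsto_const_nhds
      exact (tendsto_pow_atTop_atTop_of_one_lt hR).comp
        (tendsto_pow_atTop_atTop_of_one_lt one_lt_two)
    obtain ⟨N0, hN0⟩ : ∃ N0, q N0 < 1 := (hqt.eventually_lt_const one_pos).exists
    have hqmono : ∀ n, N0 ≤ n → q n ≤ q N0 := by
      intro n hn
      apply div_le_div_of_nonneg_left hρ0.le (by positivity)
      exact pow_le_pow_right₀ hR.le (Nat.pow_le_pow_right (by norm_num) hn)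
    -- summable majorant
    have hgeo : Summable (fun k : ℤ => (q N0) ^ k.natAbs) := by
      refine Summable.of_nat_of_neg_add_one ?_ ?_
      · have : (fun n : ℕ => (q N0) ^ ((n : ℤ)).natAbs) = fun n : ℕ => (q N0) ^ n := by
          funext n; simp
        rw [this]
        exact summable_geometric_of_lt_one (hq0 N0).le hN0
      · have : (fun n : ℕ => (q N0) ^ ((-((n : ℤ) + 1)).natAbs)) =
            fun n : ℕ => (q N0) ^ (n + 1) := by
          funext n
          congr 1
        rw [this, summable_nat_add_iff 1]
        exact summable_geometric_of_lt_one (hq0 N0).le hN0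
    have hmaj : Summable (fun k : ℤ => (C * ρ) * (q N0) ^ k.natAbs) := hgeo.mul_left _
    set S : ℝ := ∑' k : ℤ, (C * ρ) * (q N0) ^ k.natAbs with hS
    -- per-term bound
    have hbound : ∀ n : ℕ, N0 ≤ n → ∀ z ∈ K, ∀ k : ℤ,
        ‖a ((2 ^ n : ℤ) * k) * z ^ (k - 1) - (if k = 0 then a 0 / z else 0)‖ ≤
          q n / q N0 * ((C * ρ) * (q N0) ^ k.natAbs) := by
      intro n hn z hz k
      by_cases hk : k = 0
      · subst hk
        have : a ((2 ^ n : ℤ) * 0) * z ^ ((0:ℤ) - 1) - a 0 / z = 0 := by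
          rw [mul_zero, zero_sub, zpow_neg, zpow_one, div_eq_mul_inv]
          ring
        rw [if_pos rfl, this, norm_zero]
        have h1 := hq0 n
        have h2 := hq0 N0
        positivity
      · rw [if_neg hk, sub_zero]
        obtain ⟨j, hj⟩ : ∃ j : ℕ, k.natAbs = j + 1 :=
          ⟨k.natAbs - 1, by omega⟩
        have hmabs : ((2 ^ n : ℤ) * k).natAbs = 2 ^ n * k.natAbs := by
          simp [Int.natAbs_mul, Int.natAbs_pow]
        have hm0 : ((2 ^ n : ℤ) * k) ≠ 0 := mul_ne_zero (by positivity) hk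
        have h1 : ‖a ((2 ^ n : ℤ) * k)‖ ≤ C / R ^ (2 ^ n * k.natAbs) := by
          rw [le_div_iff₀ (by positivity), ← hmabs]
          exact hCb _ hm0
        have h2 : ‖z ^ (k - 1)‖ ≤ ρ ^ (k.natAbs + 1) := by
          rw [norm_zpow]
          exact hzpow' z hz k
        calc ‖a ((2 ^ n : ℤ) * k) * z ^ (k - 1)‖
            = ‖a ((2 ^ n : ℤ) * k)‖ * ‖z ^ (k - 1)‖ := norm_mul _ _
          _ ≤ (C / R ^ (2 ^ n * k.natAbs)) * ρ ^ (k.natAbs + 1) :=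
              mul_le_mul h1 h2 (norm_nonneg _) (by positivity)
          _ = (C * ρ) * (q n) ^ (j + 1) := by
              rw [hj, hq]
              rw [div_pow, pow_mul]
              field_simp
              ring
          _ ≤ (C * ρ) * (q n * (q N0) ^ j) := by
              refine mul_le_mul_of_nonneg_left ?_ (by positivity)
              rw [pow_succ, mul_comm]
              exact mul_le_mul_of_nonneg_left
                (pow_le_pow_left₀ (hq0 n).le (hqmono n hn) j) (hq0 n).le
          _ = q n / q N0 * ((C * ρ) * (q N0) ^ (j + 1)) := by
              field_simp
              rw [pow_succ, mul_div_assoc, mul_div_cancel_right₀ _ (hq0 N0).ne']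
          _ = q n / q N0 * ((C * ρ) * (q N0) ^ k.natAbs) := by rw [hj]
    -- conclude
    rw [Metric.tendstoUniformlyOn_iff]
    intro ε hε
    have htend : Tendsto (fun n => q n / q N0 * S) atTop (nhds 0) := by
      have h1 : Tendsto (fun n => q n / q N0) atTop (nhds 0) := by
        have := hqt.div_const (q N0)
        simpa using this
      simpa using h1.mul_const S
    filter_upwards [htend.eventually_lt_const hε, eventually_ge_atTop N0] with n h1 h2
    intro z hz
    rw [dist_comm, dist_eq_norm]
    have hsum := (hg n z (hK hz).1 (hK hz).2).sub (hasSum_ite_eq (0:ℤ) (a 0 / z))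
    rw [← hsum.tsum_eq]
    have hmaj2 : Summable (fun k : ℤ => q n / q N0 * ((C * ρ) * (q N0) ^ k.natAbs)) :=
      hmaj.mul_left _
    have hsummable : Summable (fun k : ℤ =>
        ‖a ((2 ^ n : ℤ) * k) * z ^ (k - 1) - (if k = 0 then a 0 / z else 0)‖) :=
      Summable.of_nonneg_of_le (fun k => norm_nonneg _) (hbound n h2 z hz) hmaj2
    calc ‖∑' k : ℤ, (a ((2 ^ n : ℤ) * k) * z ^ (k - 1) - (if k = 0 then a 0 / z else 0))‖
        ≤ ∑' k : ℤ, ‖a ((2 ^ n : ℤ) * k) * z ^ (k - 1) - (if k = 0 then a 0 / z else 0)‖ :=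
          norm_tsum_le_tsum_norm hsummable
      _ ≤ ∑' k : ℤ, q n / q N0 * ((C * ρ) * (q N0) ^ k.natAbs) :=
          Summable.tsum_le_tsum (hbound n h2 z hz) hsummable hmaj2
      _ = q n / q N0 * S := tsum_mul_left
      _ < ε := h1
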